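/- Let G be a finite simple undirected unweighted graph, u ≠ v two vertices each with degree at least 1, and R(u,v) = sup_{x : xᵀLx > 0} (x_u − x_v)²/(xᵀLx) the effective resistance. Then R(u,v) ≥ (1/2)·(1/deg(u) + 1/deg(v)). -/

import Mathlib

lemma deg_sum_aux {V : Type*} [Fintype V] (G : SimpleGraph V) [DecidableRel G.Adj]
    (w : V) : ∑ b : V, (if G.Adj w b then (1:ℝ) else 0) = G.degree w := by
  rw [SimpleGraph.degree, SimpleGraph.neighborFinset_eq_filter, Finset.card_filter]
  push_cast
  simp

lemma Q_indicator {V : Type*} [Fintype V] [DecidableEq V] (G : SimpleGraph V) [DecidableRel G.Adj]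
    (Q : (V → ℝ) → ℝ)
    (hQ : ∀ x, Q x = (1/2) * ∑ a, ∑ b, if G.Adj a b then (x a - x b)^2 else 0)
    (w : V) : Q (fun a => if a = w then (1:ℝ) else 0) = G.degree w := by
  rw [hQ]
  have key : ∀ a b : V, (if G.Adj a b then
      ((if a = w then (1:ℝ) else 0) - (if b = w then (1:ℝ) else 0))^2 else 0)
      = (if G.Adj a b ∧ a = w then (1:ℝ) else 0)
        + (if G.Adj a b ∧ b = w then (1:ℝ) else 0) := by
    intro a b
    by_cases hab : G.Adj a b
    · have hne : a ≠ b := G.ne_of_adj hab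
      by_cases ha : a = w
      · have hb : b ≠ w := fun hb => hne (ha.trans hb.symm)
        simp [hab, ha, hb]
      · by_cases hb : b = w
        · simp [hab, ha, hb]
        · simp [hab, ha, hb]
    · simp [hab]
  have : ∑ a : V, ∑ b : V, (if G.Adj a b then
      ((if a = w then (1:ℝ) else 0) - (if b = w then (1:ℝ) else 0))^2 else 0)
      = (G.degree w : ℝ) + G.degree w := by
    simp only [key, Finset.sum_add_distrib]
    congr 1
    · rw [Finset.sum_comm]
      have : ∀ b : V, ∑ a : V, (if G.Adj a b ∧ a = w then (1:ℝ) else 0)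
          = (if G.Adj w b then (1:ℝ) else 0) := by
        intro b
        rw [Finset.sum_eq_single w]
        · simp [G.adj_comm]
        · intro a _ ha; simp [ha]
        · simp
      rw [Finset.sum_congr rfl (fun b _ => this b), deg_sum_aux]
    · have : ∀ a : V, ∑ b : V, (if G.Adj a b ∧ b = w then (1:ℝ) else 0)
          = (if G.Adj a w then (1:ℝ) else 0) := by
        intro a
        rw [Finset.sum_eq_single w]
        · simp
        · intro b _ hb; simp [hb]
        · simp
      have h2 : ∑ a : V, (if G.Adj a w then (1:ℝ) else 0) = G.degree w := by
        rw [← deg_sum_aux G w]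
        exact Finset.sum_congr rfl (fun a _ => if_congr (G.adj_comm a w) rfl rfl)
      rw [Finset.sum_congr rfl (fun a _ => this a), h2]
  rw [this]; ring

theorem stmt6 {V : Type*} [Fintype V] (G : SimpleGraph V) [DecidableRel G.Adj]
    (Q : (V → ℝ) → ℝ)
    (hQ : ∀ x, Q x = (1/2) * ∑ a, ∑ b, if G.Adj a b then (x a - x b)^2 else 0)
    (u v : V) (huv : u ≠ v) (hdegu : 1 ≤ G.degree u) (hdegv : 1 ≤ G.degree v) :
    ENNReal.ofReal ((1/2) * (1 / (G.degree u : ℝ) + 1 / (G.degree v : ℝ)))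
      ≤ ⨆ (x : V → ℝ) (_ : 0 < Q x), ENNReal.ofReal ((x u - x v)^2 / Q x) := by
  classical
  have bound : ∀ w : V, ∀ z : V, w ≠ z → 1 ≤ G.degree w →
      ENNReal.ofReal (1 / (G.degree w : ℝ))
        ≤ ⨆ (x : V → ℝ) (_ : 0 < Q x), ENNReal.ofReal ((x w - x z)^2 / Q x) := by
    intro w z hwz hdeg
    set χ : V → ℝ := fun a => if a = w then (1:ℝ) else 0 with hχ
    have hQχ : Q χ = G.degree w := Q_indicator G Q hQ w
    have hpos : 0 < Q χ := by
      rw [hQχ]; exact_mod_cast Nat.lt_of_lt_of_le Nat.zero_lt_one hdeg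
    have := le_iSup₂ (f := fun (x : V → ℝ) (_ : 0 < Q x) =>
      ENNReal.ofReal ((x w - x z)^2 / Q x)) χ hpos
    refine le_trans (le_of_eq ?_) this
    have hzw : z ≠ w := fun h => hwz h.symm
    rw [hQχ]; simp [hχ, hzw]
  have hu := bound u v huv hdegu
  have hv := bound v u huv.symm hdegv
  have hv' : ENNReal.ofReal (1 / (G.degree v : ℝ))
      ≤ ⨆ (x : V → ℝ) (_ : 0 < Q x), ENNReal.ofReal ((x u - x v)^2 / Q x) := by
    refine le_trans hv (le_of_eq ?_)
    congr 1; ext x; congr 1; ext hx; congr 1; ring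
  set S := ⨆ (x : V → ℝ) (_ : 0 < Q x), ENNReal.ofReal ((x u - x v)^2 / Q x)
  have hmax : ENNReal.ofReal ((1/2) * (1 / (G.degree u : ℝ) + 1 / (G.degree v : ℝ)))
      ≤ max (ENNReal.ofReal (1 / (G.degree u : ℝ))) (ENNReal.ofReal (1 / (G.degree v : ℝ))) := by
    rcases le_total (1 / (G.degree u : ℝ)) (1 / (G.degree v : ℝ)) with h | h
    · exact le_trans (ENNReal.ofReal_le_ofReal (by linarith)) (le_max_right _ _)
    · exact le_trans (ENNReal.ofReal_le_ofReal (by linarith)) (le_max_left _ _)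
  exact le_trans hmax (max_le hu hv')
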